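/- Let n = 2m, u, v ∈ GF(2^n)*, and z ∈ GF(2^m). Then (u + vz)^(3(2^m−1)+1) = u^(2^m) v^(2(2^m−1)) + u^2 (u^(2(2^m−1)) + v^(2(2^m−1))) (u + vz)^(2^m − 2) + v^(3·2^m − 2) z, whenever u + vz ≠ 0. -/
import Mathlib


/-- In `GF(2^(2m))`, for `u, v ≠ 0`, `z ∈ GF(2^m)` and `u + vz ≠ 0`:
`(u + vz)^(3(2^m−1)+1) = u^(2^m) v^(2(2^m−1))
  + u² (u^(2(2^m−1)) + v^(2(2^m−1))) (u + vz)^(2^m − 2) + v^(3·2^m − 2) z`. -/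
theorem stmt_4 (m : ℕ) (hm : 0 < m) (F : Type*) [Field F] [Fintype F]
    (hcard : Fintype.card F = 2 ^ (2 * m))
    (u v z : F) (hu : u ≠ 0) (hv : v ≠ 0) (hz : z ^ (2 ^ m) = z)
    (huvz : u + v * z ≠ 0) :
    (u + v * z) ^ (3 * (2 ^ m - 1) + 1) =
      u ^ (2 ^ m) * v ^ (2 * (2 ^ m - 1)) +
      u ^ 2 * (u ^ (2 * (2 ^ m - 1)) + v ^ (2 * (2 ^ m - 1))) * (u + v * z) ^ (2 ^ m - 2) +
      v ^ (3 * 2 ^ m - 2) * z := by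
  -- characteristic is 2
  haveI : CharP F (ringChar F) := ringChar.charP F
  obtain ⟨n, hpr, hcard'⟩ := FiniteField.card F (ringChar F)
  have hdvd : ringChar F ∣ 2 := by
    refine hpr.dvd_of_dvd_pow (n := 2 * m) ?_
    rw [← hcard, hcard']
    exact dvd_pow_self _ n.pos.ne'
  have hchar2 : ringChar F = 2 :=
    (Nat.prime_dvd_prime_iff_eq hpr Nat.prime_two).mp hdvd
  haveI : CharP F 2 := hchar2 ▸ ringChar.charP F
  have h2 : (2 : F) = 0 := by exact_mod_cast CharP.cast_eq_zero F 2
  -- Frobenius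
  haveI : Fact (Nat.Prime 2) := ⟨Nat.prime_two⟩
  have hF : (u + v * z) ^ 2 ^ m = u ^ 2 ^ m + v ^ 2 ^ m * z := by
    rw [add_pow_char_pow, mul_pow, hz]
  -- rewrite exponents without subtraction
  obtain ⟨a, ha⟩ : ∃ a, 2 ^ m = a + 2 := by
    refine ⟨2 ^ m - 2, ?_⟩
    have : 2 ≤ 2 ^ m := by
      calc 2 = 2 ^ 1 := rfl
      _ ≤ 2 ^ m := Nat.pow_le_pow_right (by norm_num) hm
    omega
  have e1 : 3 * (2 ^ m - 1) + 1 = 3 * a + 4 := by omega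
  have e2 : 2 * (2 ^ m - 1) = 2 * a + 2 := by omega
  have e3 : 2 ^ m - 2 = a := by omega
  have e4 : 3 * 2 ^ m - 2 = 3 * a + 4 := by omega
  rw [e1, e2, e3, e4, ha]
  rw [ha] at hF
  apply mul_right_cancel₀ (pow_ne_zero 2 huvz)
  linear_combination
    (((u + v * z) ^ (a + 2)) ^ 2 + (u + v * z) ^ (a + 2) * (u ^ (a + 2) + v ^ (a + 2) * z)
      + (u ^ (a + 2) + v ^ (a + 2) * z) ^ 2
      - u ^ 2 * (u ^ (2 * a + 2) + v ^ (2 * a + 2))) * hF +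
    (u ^ (2 * a) * v ^ a * u ^ 4 * v ^ 2 * z + u ^ a * v ^ (2 * a) * u ^ 2 * v ^ 4 * z ^ 2
      - u ^ a * v ^ (2 * a) * u ^ 4 * v ^ 2 - u ^ a * v ^ (2 * a) * u ^ 3 * v ^ 3 * z
      - v ^ (3 * a) * u ^ 2 * v ^ 4 * z - v ^ (3 * a) * u * v ^ 5 * z ^ 2) * h2
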